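/- For a forecast given as the Gaussian distribution N(μ, σ²) and observation y, the continuous ranked probability score CRPS(N(μ,σ²), y) = ∫_ℝ (Φ((x-μ)/σ) - H(x ≥ y))² dx equals σ ( ω(2Φ(ω) - 1) + 2φ(ω) - 1/√π ), where ω = (y - μ)/σ, Φ and φ are the standard normal CDF and PDF, and H is the Heaviside step function. -/

import Mathlib

open Real MeasureTheory

/-- The standard normal probability density function. -/
noncomputable def stdNormalPDF (s : ℝ) : ℝ := (Real.sqrt (2 * π))⁻¹ * Real.exp (-s ^ 2 / 2)

/-- The standard normal cumulative distribution function. -/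
noncomputable def stdNormalCDF (t : ℝ) : ℝ := ∫ s in Set.Iic t, stdNormalPDF s

open Set Filter Topology

lemma pdf_pos (s : ℝ) : 0 < stdNormalPDF s := by
  unfold stdNormalPDF
  positivity

lemma pdf_cont : Continuous stdNormalPDF := by
  unfold stdNormalPDF
  continuity

lemma pdf_integrable : Integrable stdNormalPDF := by
  have h : Integrable (fun s : ℝ => Real.exp (-(1/2) * s ^ 2)) := integrable_exp_neg_mul_sq (by norm_num)
  have := h.const_mul ((Real.sqrt (2 * π))⁻¹)
  convert this using 2 with s
  unfold stdNormalPDF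
  ring_nf

lemma pdf_integral : ∫ s, stdNormalPDF s = 1 := by
  unfold stdNormalPDF
  rw [MeasureTheory.integral_const_mul]
  have : ∀ s : ℝ, Real.exp (-s ^ 2 / 2) = Real.exp (-(1/2) * s ^ 2) := by
    intro s; ring_nf
  simp_rw [this, integral_gaussian]
  rw [show π / (1/2 : ℝ) = 2 * π by ring]
  rw [inv_mul_cancel₀]
  positivity

lemma cdf_hasDeriv (t : ℝ) : HasDerivAt stdNormalCDF (stdNormalPDF t) t := by
  have key : ∀ u : ℝ, stdNormalCDF u = stdNormalCDF 0 + ∫ s in (0:ℝ)..u, stdNormalPDF s := by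
    intro u
    have := intervalIntegral.integral_Iic_sub_Iic (f := stdNormalPDF) (μ := volume)
      (pdf_integrable.integrableOn) (pdf_integrable.integrableOn) (a := 0) (b := u)
    unfold stdNormalCDF
    rw [← this]; ring
  have h2 : HasDerivAt (fun u => stdNormalCDF 0 + ∫ s in (0:ℝ)..u, stdNormalPDF s)
      (stdNormalPDF t) t := by
    apply HasDerivAt.const_add
    exact intervalIntegral.integral_hasDerivAt_right
      pdf_integrable.intervalIntegrable
      pdf_cont.stronglyMeasurable.stronglyMeasurableAtFilter
      pdf_cont.continuousAt
  exact h2.congr_of_eventuallyEq (Filter.Eventually.of_forall key)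

lemma cdf_nonneg (t : ℝ) : 0 ≤ stdNormalCDF t := by
  exact setIntegral_nonneg measurableSet_Iic fun s _ => (pdf_pos s).le

lemma one_sub_cdf (t : ℝ) : 1 - stdNormalCDF t = ∫ s in Set.Ioi t, stdNormalPDF s := by
  have := intervalIntegral.integral_Iic_add_Ioi (f := stdNormalPDF) (μ := volume) (b := t)
    pdf_integrable.integrableOn pdf_integrable.integrableOn
  rw [pdf_integral] at this
  unfold stdNormalCDF
  linarith

lemma cdf_le_one (t : ℝ) : stdNormalCDF t ≤ 1 := by
  have h := one_sub_cdf t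
  have : 0 ≤ ∫ s in Set.Ioi t, stdNormalPDF s :=
    setIntegral_nonneg measurableSet_Ioi fun s _ => (pdf_pos s).le
  linarith

noncomputable def cBound : ℝ := (Real.sqrt (2 * π))⁻¹ * Real.exp (1/2)

lemma cBound_pos : 0 < cBound := by
  unfold cBound; positivity

lemma pdf_le_exp (s : ℝ) : stdNormalPDF s ≤ cBound * Real.exp s := by
  unfold stdNormalPDF cBound
  rw [mul_assoc, ← Real.exp_add]
  have h1 : -s ^ 2 / 2 ≤ 1/2 + s := by nlinarith [sq_nonneg (s + 1)]
  have h2 : (0:ℝ) < (Real.sqrt (2 * π))⁻¹ := by positivity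
  exact mul_le_mul_of_nonneg_left (Real.exp_le_exp.2 h1) h2.le

lemma pdf_le_exp_neg (s : ℝ) : stdNormalPDF s ≤ cBound * Real.exp (-s) := by
  unfold stdNormalPDF cBound
  rw [mul_assoc, ← Real.exp_add]
  have h1 : -s ^ 2 / 2 ≤ 1/2 + -s := by nlinarith [sq_nonneg (s - 1)]
  have h2 : (0:ℝ) < (Real.sqrt (2 * π))⁻¹ := by positivity
  exact mul_le_mul_of_nonneg_left (Real.exp_le_exp.2 h1) h2.le

lemma cdf_le (t : ℝ) : stdNormalCDF t ≤ cBound * Real.exp t := by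
  have h1 : stdNormalCDF t ≤ ∫ s in Set.Iic t, cBound * Real.exp s := by
    unfold stdNormalCDF
    apply setIntegral_mono_on pdf_integrable.integrableOn
      ((integrableOn_exp_Iic t).const_mul cBound) measurableSet_Iic
    intro s _
    exact pdf_le_exp s
  calc stdNormalCDF t ≤ _ := h1
    _ = cBound * Real.exp t := by rw [MeasureTheory.integral_const_mul, integral_exp_Iic]

lemma one_sub_cdf_le (t : ℝ) : 1 - stdNormalCDF t ≤ cBound * Real.exp (-t) := by
  rw [one_sub_cdf]
  have expneg : IntegrableOn (fun s : ℝ => Real.exp (-s)) (Set.Ioi t) := by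
    have := exp_neg_integrableOn_Ioi t (b := 1) one_pos
    simpa using this
  have h1 : ∫ s in Set.Ioi t, stdNormalPDF s ≤ ∫ s in Set.Ioi t, cBound * Real.exp (-s) := by
    apply setIntegral_mono_on pdf_integrable.integrableOn
      (expneg.const_mul cBound) measurableSet_Ioi
    intro s _
    exact pdf_le_exp_neg s
  calc _ ≤ _ := h1
    _ = cBound * Real.exp (-t) := by rw [MeasureTheory.integral_const_mul, integral_exp_neg_Ioi]

lemma cdf_tendsto_atBot : Tendsto stdNormalCDF atBot (nhds 0) := by
  have h1 : Tendsto (fun t : ℝ => cBound * Real.exp t) atBot (nhds (cBound * 0)) :=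
    tendsto_exp_atBot.const_mul _
  rw [mul_zero] at h1
  exact tendsto_of_tendsto_of_tendsto_of_le_of_le tendsto_const_nhds h1
    (fun t => cdf_nonneg t) (fun t => cdf_le t)

lemma cdf_tendsto_atTop : Tendsto stdNormalCDF atTop (nhds 1) := by
  have h1 : Tendsto (fun t : ℝ => 1 - cBound * Real.exp (-t)) atTop (nhds (1 - cBound * 0)) := by
    apply Tendsto.const_sub
    exact (tendsto_exp_atBot.comp tendsto_neg_atTop_atBot).const_mul _
  rw [mul_zero, sub_zero] at h1
  exact tendsto_of_tendsto_of_tendsto_of_le_of_le h1 tendsto_const_nhds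
    (fun t => by have := one_sub_cdf_le t; linarith) (fun t => cdf_le_one t)

lemma cdf_cont : Continuous stdNormalCDF := by
  have : Differentiable ℝ stdNormalCDF := fun t => (cdf_hasDeriv t).differentiableAt
  exact this.continuous

lemma pdf_hasDeriv (t : ℝ) : HasDerivAt stdNormalPDF (-t * stdNormalPDF t) t := by
  unfold stdNormalPDF
  have h1 : HasDerivAt (fun s : ℝ => -s ^ 2 / 2) (-t) t := by
    have := ((hasDerivAt_pow 2 t).neg).div_const 2
    refine this.congr_deriv ?_
    push_cast
    ring
  have h2 := (h1.exp).const_mul ((Real.sqrt (2 * π))⁻¹)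
  refine h2.congr_deriv ?_
  ring

lemma cdf_sqrt2_hasDeriv (t : ℝ) :
    HasDerivAt (fun u => stdNormalCDF (Real.sqrt 2 * u))
      (Real.sqrt 2 * stdNormalPDF (Real.sqrt 2 * t)) t := by
  have h1 : HasDerivAt (fun u : ℝ => Real.sqrt 2 * u) (Real.sqrt 2) t := by
    simpa using (hasDerivAt_id t).const_mul (Real.sqrt 2)
  have := (cdf_hasDeriv (Real.sqrt 2 * t)).comp t h1
  refine this.congr_deriv ?_
  ring

lemma key_identity (t : ℝ) :
    (Real.sqrt π)⁻¹ * (Real.sqrt 2 * stdNormalPDF (Real.sqrt 2 * t)) =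
      2 * stdNormalPDF t ^ 2 := by
  unfold stdNormalPDF
  have h2 : (Real.sqrt 2 * t) ^ 2 = 2 * t ^ 2 := by
    rw [mul_pow, Real.sq_sqrt (by norm_num : (2:ℝ) ≥ 0)]
  rw [h2]
  have e1 : Real.exp (-t ^ 2 / 2) ^ 2 = Real.exp (-(2 * t ^ 2) / 2) := by
    rw [sq, ← Real.exp_add]; ring_nf
  rw [mul_pow, e1]
  have hsqrt : Real.sqrt (2 * π) = Real.sqrt 2 * Real.sqrt π :=
    Real.sqrt_mul (by norm_num) π
  have hπ : (0:ℝ) < π := Real.pi_pos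
  have h2pos : (0:ℝ) < Real.sqrt 2 := by positivity
  have hπpos : (0:ℝ) < Real.sqrt π := by positivity
  have hsq : Real.sqrt π * Real.sqrt π = π := Real.mul_self_sqrt hπ.le
  have hsq2 : Real.sqrt 2 * Real.sqrt 2 = 2 := Real.mul_self_sqrt (by norm_num)
  rw [hsqrt]
  field_simp
  linear_combination hsq2

noncomputable def A (t : ℝ) : ℝ :=
  t * stdNormalCDF t ^ 2 + 2 * stdNormalCDF t * stdNormalPDF t
    - (Real.sqrt π)⁻¹ * stdNormalCDF (Real.sqrt 2 * t)

noncomputable def B (t : ℝ) : ℝ :=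
  t * (stdNormalCDF t - 1) ^ 2 + 2 * (stdNormalCDF t - 1) * stdNormalPDF t
    - (Real.sqrt π)⁻¹ * stdNormalCDF (Real.sqrt 2 * t)

lemma A_hasDeriv (t : ℝ) : HasDerivAt A (stdNormalCDF t ^ 2) t := by
  have h1 : HasDerivAt (fun u => u * stdNormalCDF u ^ 2)
      (stdNormalCDF t ^ 2 + t * (2 * stdNormalCDF t * stdNormalPDF t)) t := by
    have := (hasDerivAt_id t).mul ((cdf_hasDeriv t).pow 2)
    refine this.congr_deriv ?_
    simp
  have h2 : HasDerivAt (fun u => 2 * stdNormalCDF u * stdNormalPDF u)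
      (2 * stdNormalPDF t * stdNormalPDF t
        + 2 * stdNormalCDF t * (-t * stdNormalPDF t)) t := by
    have := ((cdf_hasDeriv t).const_mul 2).mul (pdf_hasDeriv t)
    exact this
  have h3 := (cdf_sqrt2_hasDeriv t).const_mul ((Real.sqrt π)⁻¹)
  have := (h1.add h2).sub h3
  refine this.congr_deriv ?_
  rw [key_identity t]
  ring

lemma B_hasDeriv (t : ℝ) : HasDerivAt B ((stdNormalCDF t - 1) ^ 2) t := by
  have hc : HasDerivAt (fun u => stdNormalCDF u - 1) (stdNormalPDF t) t :=
    (cdf_hasDeriv t).sub_const 1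
  have h1 : HasDerivAt (fun u => u * (stdNormalCDF u - 1) ^ 2)
      ((stdNormalCDF t - 1) ^ 2 + t * (2 * (stdNormalCDF t - 1) * stdNormalPDF t)) t := by
    have := (hasDerivAt_id t).mul (hc.pow 2)
    refine this.congr_deriv ?_
    simp
  have h2 : HasDerivAt (fun u => 2 * (stdNormalCDF u - 1) * stdNormalPDF u)
      (2 * stdNormalPDF t * stdNormalPDF t
        + 2 * (stdNormalCDF t - 1) * (-t * stdNormalPDF t)) t := by
    have := (hc.const_mul 2).mul (pdf_hasDeriv t)
    exact this
  have h3 := (cdf_sqrt2_hasDeriv t).const_mul ((Real.sqrt π)⁻¹)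
  have := (h1.add h2).sub h3
  refine this.congr_deriv ?_
  rw [key_identity t]
  ring

lemma pdf_tendsto_atBot : Tendsto stdNormalPDF atBot (nhds 0) := by
  have h1 : Tendsto (fun t : ℝ => cBound * Real.exp t) atBot (nhds (cBound * 0)) :=
    tendsto_exp_atBot.const_mul _
  rw [mul_zero] at h1
  exact tendsto_of_tendsto_of_tendsto_of_le_of_le tendsto_const_nhds h1
    (fun t => (pdf_pos t).le) (fun t => pdf_le_exp t)

lemma pdf_tendsto_atTop : Tendsto stdNormalPDF atTop (nhds 0) := by
  have h1 : Tendsto (fun t : ℝ => cBound * Real.exp (-t)) atTop (nhds (cBound * 0)) :=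
    ((tendsto_exp_atBot.comp tendsto_neg_atTop_atBot)).const_mul _
  rw [mul_zero] at h1
  exact tendsto_of_tendsto_of_tendsto_of_le_of_le tendsto_const_nhds h1
    (fun t => (pdf_pos t).le) (fun t => pdf_le_exp_neg t)

lemma aux_tendsto_atBot : Tendsto (fun t : ℝ => t * Real.exp (2 * t)) atBot (nhds 0) := by
  have h1 : Tendsto (fun x : ℝ => x * Real.exp (-x)) atTop (nhds 0) := by
    simpa using tendsto_pow_mul_exp_neg_atTop_nhds_zero 1
  have h2 : Tendsto (fun t : ℝ => (-2 : ℝ) * t) atBot atTop :=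
    (tendsto_const_mul_atTop_of_neg (by norm_num : (-2:ℝ) < 0)).2 tendsto_id
  have h3 := (h1.comp h2).const_mul (-(1:ℝ)/2)
  rw [mul_zero] at h3
  convert h3 using 2 with t
  simp only [Function.comp]
  ring_nf

lemma aux_tendsto_atTop : Tendsto (fun t : ℝ => t * Real.exp (-(2 * t))) atTop (nhds 0) := by
  have h1 : Tendsto (fun x : ℝ => x * Real.exp (-x)) atTop (nhds 0) := by
    simpa using tendsto_pow_mul_exp_neg_atTop_nhds_zero 1
  have h2 : Tendsto (fun t : ℝ => (2 : ℝ) * t) atTop atTop :=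
    (tendsto_const_mul_atTop_of_pos (by norm_num : (0:ℝ) < 2)).2 tendsto_id
  have h3 := (h1.comp h2).const_mul ((1:ℝ)/2)
  rw [mul_zero] at h3
  convert h3 using 2 with t
  simp only [Function.comp]
  ring_nf

lemma A_tendsto : Tendsto A atBot (nhds 0) := by
  have h1 : Tendsto (fun t : ℝ => t * stdNormalCDF t ^ 2) atBot (nhds 0) := by
    apply squeeze_zero_norm (a := fun t => cBound ^ 2 * |t * Real.exp (2 * t)|)
    · intro t
      have hb : stdNormalCDF t ≤ cBound * Real.exp t := cdf_le t
      have hnn : 0 ≤ stdNormalCDF t := cdf_nonneg t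
      have : stdNormalCDF t ^ 2 ≤ (cBound * Real.exp t) ^ 2 := by nlinarith
      calc ‖t * stdNormalCDF t ^ 2‖ = |t| * stdNormalCDF t ^ 2 := by
            rw [Real.norm_eq_abs, abs_mul, abs_of_nonneg (sq_nonneg (stdNormalCDF t))]
        _ ≤ |t| * (cBound * Real.exp t) ^ 2 :=
            mul_le_mul_of_nonneg_left this (abs_nonneg t)
        _ = cBound ^ 2 * |t * Real.exp (2 * t)| := by
            rw [abs_mul, abs_of_nonneg (Real.exp_pos _).le]
            rw [show Real.exp (2*t) = Real.exp t * Real.exp t by rw [← Real.exp_add]; ring_nf]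
            ring
    · have := (aux_tendsto_atBot.abs).const_mul (cBound ^ 2)
      simpa using this
  have h2 : Tendsto (fun t : ℝ => 2 * stdNormalCDF t * stdNormalPDF t) atBot (nhds 0) := by
    have := (cdf_tendsto_atBot.const_mul 2).mul pdf_tendsto_atBot
    simpa using this
  have h3 : Tendsto (fun t : ℝ => (Real.sqrt π)⁻¹ * stdNormalCDF (Real.sqrt 2 * t)) atBot
      (nhds ((Real.sqrt π)⁻¹ * 0)) := by
    apply Tendsto.const_mul
    apply cdf_tendsto_atBot.comp
    exact (tendsto_const_mul_atBot_of_pos (by positivity : (0:ℝ) < Real.sqrt 2)).2 tendsto_id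
  rw [mul_zero] at h3
  have := (h1.add h2).sub h3
  simp at this; exact this

lemma B_tendsto : Tendsto B atTop (nhds (-(Real.sqrt π)⁻¹)) := by
  have h1 : Tendsto (fun t : ℝ => t * (stdNormalCDF t - 1) ^ 2) atTop (nhds 0) := by
    apply squeeze_zero_norm (a := fun t => cBound ^ 2 * |t * Real.exp (-(2 * t))|)
    · intro t
      have hb : 1 - stdNormalCDF t ≤ cBound * Real.exp (-t) := one_sub_cdf_le t
      have hle : stdNormalCDF t ≤ 1 := cdf_le_one t
      have : (stdNormalCDF t - 1) ^ 2 ≤ (cBound * Real.exp (-t)) ^ 2 := by nlinarith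
      calc ‖t * (stdNormalCDF t - 1) ^ 2‖ = |t| * (stdNormalCDF t - 1) ^ 2 := by
            rw [Real.norm_eq_abs, abs_mul, abs_of_nonneg (sq_nonneg (stdNormalCDF t - 1))]
        _ ≤ |t| * (cBound * Real.exp (-t)) ^ 2 :=
            mul_le_mul_of_nonneg_left this (abs_nonneg t)
        _ = cBound ^ 2 * |t * Real.exp (-(2 * t))| := by
            rw [abs_mul, abs_of_nonneg (Real.exp_pos _).le]
            rw [show Real.exp (-(2*t)) = Real.exp (-t) * Real.exp (-t) by
              rw [← Real.exp_add]; ring_nf]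
            ring
    · have := (aux_tendsto_atTop.abs).const_mul (cBound ^ 2)
      simpa using this
  have h2 : Tendsto (fun t : ℝ => 2 * (stdNormalCDF t - 1) * stdNormalPDF t) atTop (nhds 0) := by
    have := (((cdf_tendsto_atTop.sub_const 1).const_mul 2)).mul pdf_tendsto_atTop
    simpa using this
  have h3 : Tendsto (fun t : ℝ => (Real.sqrt π)⁻¹ * stdNormalCDF (Real.sqrt 2 * t)) atTop
      (nhds ((Real.sqrt π)⁻¹ * 1)) := by
    apply Tendsto.const_mul
    apply cdf_tendsto_atTop.comp
    exact (tendsto_const_mul_atTop_of_pos (by positivity : (0:ℝ) < Real.sqrt 2)).2 tendsto_id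
  rw [mul_one] at h3
  have := (h1.add h2).sub h3
  simp at this; exact this

lemma sq_cdf_integrableOn (c : ℝ) :
    IntegrableOn (fun t => stdNormalCDF t ^ 2) (Set.Iic c) := by
  apply Integrable.mono' (((integrableOn_exp_Iic c).const_mul (cBound ^ 2 * Real.exp c)))
  · exact ((cdf_cont.pow 2).aestronglyMeasurable).restrict
  · filter_upwards [ae_restrict_mem measurableSet_Iic] with t ht
    have hb : stdNormalCDF t ≤ cBound * Real.exp t := cdf_le t
    have hnn : 0 ≤ stdNormalCDF t := cdf_nonneg t
    have h1 : stdNormalCDF t ^ 2 ≤ (cBound * Real.exp t) ^ 2 := by nlinarith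
    have h2 : Real.exp t ≤ Real.exp c := Real.exp_le_exp.2 ht
    rw [Real.norm_eq_abs, abs_of_nonneg (sq_nonneg _)]
    calc stdNormalCDF t ^ 2 ≤ (cBound * Real.exp t) ^ 2 := h1
      _ = cBound ^ 2 * Real.exp t * Real.exp t := by ring
      _ ≤ cBound ^ 2 * Real.exp c * Real.exp t := by
          have : (0:ℝ) ≤ cBound ^ 2 * Real.exp t := by positivity
          nlinarith [Real.exp_pos t, sq_nonneg cBound]
      _ = cBound ^ 2 * Real.exp c * Real.exp t := rfl

lemma int_Iic (ω : ℝ) : ∫ t in Set.Iic ω, stdNormalCDF t ^ 2 = A ω := by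
  have := integral_Iic_of_hasDerivAt_of_tendsto' (f := A)
    (fun x _ => A_hasDeriv x) (sq_cdf_integrableOn ω) A_tendsto
  rw [this, sub_zero]

lemma sq_cdf_sub_one_integrableOn (c : ℝ) :
    IntegrableOn (fun t => (stdNormalCDF t - 1) ^ 2) (Set.Ioi c) :=
  integrableOn_Ioi_deriv_of_nonneg' (g := B) (fun x _ => B_hasDeriv x)
    (fun x _ => sq_nonneg _) B_tendsto

lemma int_Ioi (ω : ℝ) :
    ∫ t in Set.Ioi ω, (stdNormalCDF t - 1) ^ 2 = -(Real.sqrt π)⁻¹ - B ω :=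
  integral_Ioi_of_hasDerivAt_of_nonneg' (fun x _ => B_hasDeriv x)
    (fun x _ => sq_nonneg _) B_tendsto

lemma whole_line (ω : ℝ) :
    ∫ t : ℝ, (stdNormalCDF t - (if ω ≤ t then (1:ℝ) else 0)) ^ 2 =
      ω * (2 * stdNormalCDF ω - 1) + 2 * stdNormalPDF ω - (Real.sqrt π)⁻¹ := by
  set g : ℝ → ℝ := fun t => (stdNormalCDF t - (if ω ≤ t then (1:ℝ) else 0)) ^ 2 with hg
  have hIio : ∀ t ∈ Set.Iio ω, g t = stdNormalCDF t ^ 2 := by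
    intro t ht
    simp only [hg, if_neg (not_le.2 (Set.mem_Iio.1 ht)), sub_zero]
  have hIci : ∀ t ∈ Set.Ici ω, g t = (stdNormalCDF t - 1) ^ 2 := by
    intro t ht
    simp only [hg, if_pos (Set.mem_Ici.1 ht)]
  have hint1 : IntegrableOn g (Set.Iio ω) := by
    apply (((sq_cdf_integrableOn ω).mono_set Iio_subset_Iic_self)).congr_fun
      (fun t ht => (hIio t ht).symm) measurableSet_Iio
  have hint2 : IntegrableOn g (Set.Ici ω) := by
    have h1 : IntegrableOn (fun t => (stdNormalCDF t - 1) ^ 2) (Set.Ici ω) := by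
      rw [integrableOn_Ici_iff_integrableOn_Ioi]
      exact sq_cdf_sub_one_integrableOn ω
    exact h1.congr_fun (fun t ht => (hIci t ht).symm) measurableSet_Ici
  rw [← intervalIntegral.integral_Iio_add_Ici (b := ω) hint1 hint2]
  have e1 : ∫ t in Set.Iio ω, g t = A ω := by
    rw [setIntegral_congr_fun measurableSet_Iio hIio,
      ← integral_Iic_eq_integral_Iio, int_Iic]
  have e2 : ∫ t in Set.Ici ω, g t = -(Real.sqrt π)⁻¹ - B ω := by
    rw [setIntegral_congr_fun measurableSet_Ici hIci,
      integral_Ici_eq_integral_Ioi, int_Ioi]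
  rw [e1, e2]
  unfold A B
  ring


/-- Closed form of the CRPS of a Gaussian forecast `N(μ, σ²)` against observation `y`:
`∫ (Φ((x-μ)/σ) - H(x ≥ y))² dx = σ (ω(2Φ(ω)-1) + 2φ(ω) - 1/√π)` with `ω = (y-μ)/σ`. -/
theorem crps_gaussian (μ σ y : ℝ) (hσ : 0 < σ) :
    (∫ x : ℝ, (stdNormalCDF ((x - μ) / σ) - (if y ≤ x then (1 : ℝ) else 0)) ^ 2) =
      σ * ((y - μ) / σ * (2 * stdNormalCDF ((y - μ) / σ) - 1) +
        2 * stdNormalPDF ((y - μ) / σ) - (Real.sqrt π)⁻¹) := by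
  set ω := (y - μ) / σ with hω
  set g : ℝ → ℝ := fun t => (stdNormalCDF t - (if ω ≤ t then (1:ℝ) else 0)) ^ 2 with hg
  have hiff : ∀ x : ℝ, (y ≤ x) ↔ (ω ≤ (x - μ) / σ) := by
    intro x
    rw [hω]
    rw [div_le_div_iff_of_pos_right hσ]
    constructor <;> intro h <;> linarith
  have step1 : (∫ x : ℝ, (stdNormalCDF ((x - μ) / σ) - (if y ≤ x then (1 : ℝ) else 0)) ^ 2)
      = ∫ x : ℝ, g ((x - μ) / σ) := by
    congr 1
    funext x
    simp only [hg]
    congr 1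
    rw [if_congr (hiff x) rfl rfl]
  have step2 : (∫ x : ℝ, g ((x - μ) / σ)) = ∫ x : ℝ, g (x / σ) := by
    have := MeasureTheory.integral_sub_right_eq_self (μ := volume) (fun x => g (x / σ)) μ
    simp only [sub_div] at this ⊢
    convert this using 2
  have step3 : (∫ x : ℝ, g (x / σ)) = σ * ∫ t : ℝ, g t := by
    rw [MeasureTheory.Measure.integral_comp_div g σ, abs_of_pos hσ, smul_eq_mul]
  rw [step1, step2, step3, whole_line ω]
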